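/- Let Δ > 0, T a positive integer, and ν = 2·W(Δ²T/2)/Δ² where W is the Lambert function. Then for all integers n ≥ ν, (2/n)·log(T/n) ≤ Δ²·ν/n, and consequently Σ_{n=⌈ν⌉}^∞ exp(-(Δ²/2)·(√n - √ν)²) ≤ 1 + 2/Δ² + √(2πν)/Δ. -/

import Mathlib

open Real MeasureTheory Set Filter


lemma aux_int_x {b : ℝ} (hb : 0 < b) :
    ∫ x in Set.Ioi (0:ℝ), x * Real.exp (-b * x^2) = 1/(2*b) := by
  have h := integral_Ioi_of_hasDerivAt_of_tendsto'
    (f := fun x : ℝ => -Real.exp (-b*x^2)/(2*b))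
    (f' := fun x : ℝ => x * Real.exp (-b*x^2)) (a := 0) (m := 0)
    ?_ ?_ ?_
  · rw [h]; field_simp; simp
  · intro x _
    have h1 : HasDerivAt (fun x : ℝ => -b*x^2) (-b*(2*x)) x := by
      simpa using (hasDerivAt_pow 2 x).const_mul (-b)
    have h2 := (h1.exp.div_const (2*b)).neg
    convert h2 using 1
    · funext y; simp only [Pi.neg_apply]; ring
    · show x * rexp (-b * x ^ 2) = -(rexp (-b * x ^ 2) * (-b * (2 * x)) / (2 * b))
      field_simp
  · exact (integrable_mul_exp_neg_mul_sq hb).integrableOn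
  · have h1 : Tendsto (fun x : ℝ => b * x^2) atTop atTop := by
      exact (tendsto_pow_atTop two_ne_zero).const_mul_atTop hb
    have h2 : Tendsto (fun x : ℝ => Real.exp (-(b * x^2))) atTop (nhds 0) :=
      tendsto_exp_neg_atTop_nhds_zero.comp h1
    have h3 := (h2.div_const (2*b)).neg
    simp only [neg_zero, zero_div] at h3
    convert h3 using 2 with x
    ring_nf

lemma aux_integral {b ν : ℝ} (hb : 0 < b) (hν : 0 ≤ ν) :
    IntegrableOn (fun x => Real.exp (-b * (Real.sqrt x - Real.sqrt ν)^2)) (Set.Ioi ν) ∧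
    ∫ x in Set.Ioi ν, Real.exp (-b * (Real.sqrt x - Real.sqrt ν)^2)
      = 1/b + Real.sqrt ν * Real.sqrt (π / b) := by
  set g : ℝ → ℝ := fun x => Real.exp (-b * (Real.sqrt x - Real.sqrt ν)^2) with hg
  set φ : ℝ → ℝ := fun u => (u + Real.sqrt ν)^2 with hφ
  have hsq : Real.sqrt ν ^ 2 = ν := Real.sq_sqrt hν
  have himg : φ '' Set.Ioi 0 = Set.Ioi ν := by
    ext x
    constructor
    · rintro ⟨u, hu, rfl⟩
      simp only [hφ, Set.mem_Ioi] at *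
      calc ν = Real.sqrt ν ^ 2 := hsq.symm
        _ < (u + Real.sqrt ν)^2 := by
            have h0 : 0 ≤ Real.sqrt ν := Real.sqrt_nonneg ν
            nlinarith
    · intro hx
      simp only [Set.mem_Ioi] at hx
      refine ⟨Real.sqrt x - Real.sqrt ν, ?_, ?_⟩
      · simp only [Set.mem_Ioi, sub_pos]
        exact Real.sqrt_lt_sqrt hν hx
      · simp only [hφ, sub_add_cancel]
        exact Real.sq_sqrt (hν.trans hx.le)
  have hderiv : ∀ u ∈ Set.Ioi (0:ℝ), HasDerivWithinAt φ (2*(u + Real.sqrt ν)) (Set.Ioi 0) u := by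
    intro u _
    have : HasDerivAt φ (2*(u + Real.sqrt ν)) u := by
      simpa using ((hasDerivAt_id u).add_const (Real.sqrt ν)).fun_pow 2
    exact this.hasDerivWithinAt
  have hinj : Set.InjOn φ (Set.Ioi 0) := by
    have : StrictMonoOn φ (Set.Ioi 0) := by
      intro u hu v hv huv
      have h0 : 0 ≤ Real.sqrt ν := Real.sqrt_nonneg ν
      simp only [Set.mem_Ioi] at hu hv
      simp only [hφ]
      nlinarith
    exact this.injOn
  have hkey : ∀ u ∈ Set.Ioi (0:ℝ),
      |2*(u + Real.sqrt ν)| • g (φ u) = 2*(u * Real.exp (-b*u^2)) + (2*Real.sqrt ν) * Real.exp (-b*u^2) := by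
    intro u hu
    simp only [Set.mem_Ioi] at hu
    have h0 : 0 ≤ Real.sqrt ν := Real.sqrt_nonneg ν
    have h1 : Real.sqrt (φ u) = u + Real.sqrt ν := by
      simp only [hφ]; exact Real.sqrt_sq (by linarith)
    simp only [hg, smul_eq_mul, h1, add_sub_cancel_right, abs_of_nonneg (by linarith : (0:ℝ) ≤ 2*(u + Real.sqrt ν))]
    ring
  have hInt2 : Integrable (fun u : ℝ => 2*(u * Real.exp (-b*u^2)) + (2*Real.sqrt ν) * Real.exp (-b*u^2)) := by
    exact ((integrable_mul_exp_neg_mul_sq hb).const_mul 2).add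
      ((integrable_exp_neg_mul_sq hb).const_mul (2*Real.sqrt ν))
  have hiff := integrableOn_image_iff_integrableOn_abs_deriv_smul measurableSet_Ioi hderiv hinj g
  have hI : IntegrableOn g (Set.Ioi ν) := by
    rw [← himg, hiff]
    exact (hInt2.integrableOn).congr_fun (fun u hu => (hkey u hu).symm) measurableSet_Ioi
  refine ⟨hI, ?_⟩
  rw [← himg, integral_image_eq_integral_abs_deriv_smul measurableSet_Ioi hderiv hinj g,
    setIntegral_congr_fun measurableSet_Ioi hkey]
  rw [integral_add ((integrable_mul_exp_neg_mul_sq hb).const_mul 2).integrableOn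
      ((integrable_exp_neg_mul_sq hb).const_mul (2*Real.sqrt ν)).integrableOn,
    integral_const_mul, integral_const_mul, aux_int_x hb, integral_gaussian_Ioi b]
  field_simp

/-- Let `Δ > 0`, `T ≥ 1` an integer, and `ν = 2·W(Δ²T/2)/Δ²` where `W` is the Lambert
function (here given by `w > 0` with `w·exp(w) = Δ²T/2`). Then for all integers `n ≥ ν`,
`(2/n)·log(T/n) ≤ Δ²·ν/n`, and
`Σ_{n=⌈ν⌉}^∞ exp(-(Δ²/2)·(√n - √ν)²) ≤ 1 + 2/Δ² + √(2πν)/Δ`. -/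
theorem lambert_threshold_sum_bound (Δ : ℝ) (hΔ : 0 < Δ) (T : ℕ) (hT : 1 ≤ T)
    (w ν : ℝ) (hw : 0 < w) (hwe : w * Real.exp w = Δ ^ 2 * T / 2)
    (hν : ν = 2 * w / Δ ^ 2) :
    (∀ n : ℕ, ν ≤ n → (2 / n) * Real.log ((T : ℝ) / n) ≤ Δ ^ 2 * ν / n) ∧
      ∑' k : ℕ, Real.exp (-(Δ ^ 2 / 2) *
          (Real.sqrt ((⌈ν⌉₊ : ℝ) + k) - Real.sqrt ν) ^ 2) ≤
        1 + 2 / Δ ^ 2 + Real.sqrt (2 * π * ν) / Δ := by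
  have hν0 : 0 < ν := by rw [hν]; positivity
  have hexp : Real.exp w = Δ ^ 2 * T / (2 * w) := by
    rw [eq_div_iff (by positivity)]
    nlinarith [hwe]
  have hTν : Real.exp w * ν = T := by
    rw [hexp, hν]; field_simp
  constructor
  · intro n hn
    have hn0 : 0 < (n : ℝ) := lt_of_lt_of_le hν0 hn
    have hT0 : 0 < (T : ℝ) := by exact_mod_cast hT
    have hlog : Real.log ((T : ℝ) / n) ≤ w := by
      rw [Real.log_le_iff_le_exp (by positivity), div_le_iff₀ hn0, ← hTν]
      exact mul_le_mul_of_nonneg_left hn (Real.exp_nonneg w)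
    have heq : Δ ^ 2 * ν / n = 2 / n * w := by
      rw [hν]; field_simp
    rw [heq]
    exact mul_le_mul_of_nonneg_left hlog (by positivity)
  · set b : ℝ := Δ ^ 2 / 2 with hb
    have hb0 : 0 < b := by positivity
    set g : ℝ → ℝ := fun x => Real.exp (-b * (Real.sqrt x - Real.sqrt ν) ^ 2) with hg
    obtain ⟨hI, hval⟩ := aux_integral hb0 hν0.le
    set C : ℝ := 1 + 2 / Δ ^ 2 + Real.sqrt (2 * π * ν) / Δ with hC
    have hIC : 1 + (∫ x in Set.Ioi ν, g x) = C := by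
      rw [hval, hC, hb]
      have h1 : (1 : ℝ) / (Δ ^ 2 / 2) = 2 / Δ ^ 2 := by field_simp
      have h2 : Real.sqrt ν * Real.sqrt (π / (Δ ^ 2 / 2)) = Real.sqrt (2 * π * ν) / Δ := by
        rw [show π / (Δ ^ 2 / 2) = 2 * π / Δ ^ 2 by ring,
          Real.sqrt_div (by positivity) _, Real.sqrt_sq hΔ.le,
          show (2 : ℝ) * π * ν = ν * (2 * π) by ring, Real.sqrt_mul hν0.le]
        ring
      rw [h1, h2]; ring
    have hm : ν ≤ (⌈ν⌉₊ : ℝ) := Nat.le_ceil ν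
    have hanti : AntitoneOn g (Set.Ici ν) := by
      intro x hx y hy hxy
      simp only [Set.mem_Ici] at hx hy
      simp only [hg]
      apply Real.exp_le_exp.2
      have h1 : Real.sqrt ν ≤ Real.sqrt x := Real.sqrt_le_sqrt hx
      have h2 : Real.sqrt x ≤ Real.sqrt y := Real.sqrt_le_sqrt hxy
      have h3 : (Real.sqrt x - Real.sqrt ν)^2 ≤ (Real.sqrt y - Real.sqrt ν)^2 := by nlinarith
      nlinarith [mul_le_mul_of_nonneg_left h3 hb0.le]
    have hpartial : ∀ N : ℕ,
        ∑ k ∈ Finset.range N, g ((⌈ν⌉₊ : ℝ) + k) ≤ C := by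
      intro N
      rcases N with _ | n
      · simp only [Finset.range_zero, Finset.sum_empty]
        rw [← hIC]
        have : 0 ≤ ∫ x in Set.Ioi ν, g x := by
          apply setIntegral_nonneg measurableSet_Ioi
          intro x _; exact Real.exp_nonneg _
        linarith
      · rw [Finset.sum_range_succ']
        have h1 : g ((⌈ν⌉₊ : ℝ) + (0 : ℕ)) ≤ 1 := by
          simp only [hg]
          apply Real.exp_le_one_iff.2
          have : 0 ≤ (Real.sqrt ((⌈ν⌉₊ : ℝ) + (0:ℕ)) - Real.sqrt ν) ^ 2 := sq_nonneg _
          nlinarith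
        have h2 : ∑ i ∈ Finset.range n, g ((⌈ν⌉₊ : ℝ) + (i + 1 : ℕ)) ≤
            ∫ x in Set.Ioi ν, g x := by
          have h3 : AntitoneOn g (Set.Icc (⌈ν⌉₊ : ℝ) ((⌈ν⌉₊ : ℝ) + n)) := by
            apply hanti.mono
            intro x hx
            exact Set.mem_of_mem_of_subset hx (Set.Icc_subset_Ici_self.trans (Set.Ici_subset_Ici.2 hm))
          calc ∑ i ∈ Finset.range n, g ((⌈ν⌉₊ : ℝ) + (i + 1 : ℕ))
              ≤ ∫ x in (⌈ν⌉₊ : ℝ)..((⌈ν⌉₊ : ℝ) + n), g x := h3.sum_le_integral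
            _ = ∫ x in Set.Ioc (⌈ν⌉₊ : ℝ) ((⌈ν⌉₊ : ℝ) + n), g x := by
                rw [intervalIntegral.integral_of_le (le_add_of_nonneg_right (Nat.cast_nonneg n))]
            _ ≤ ∫ x in Set.Ioi ν, g x := by
                apply setIntegral_mono_set hI
                · filter_upwards with x using Real.exp_nonneg _
                · filter_upwards with x hx
                  exact lt_of_le_of_lt hm hx.1
          done
        calc (∑ i ∈ Finset.range n, g ((⌈ν⌉₊ : ℝ) + (i + 1 : ℕ))) + g ((⌈ν⌉₊ : ℝ) + (0 : ℕ))
            ≤ (∫ x in Set.Ioi ν, g x) + 1 := add_le_add h2 h1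
          _ = C := by rw [← hIC]; ring
    exact tsum_le_of_sum_range_le (fun k => Real.exp_nonneg _) hpartial
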